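/- There is a Lebesgue-null Borel set F ⊆ ℝⁿ and a constant C' ≥ 1, depending only on n and the constant C in the comparability hypothesis between d and μ, such that for every x ∈ ℝⁿ \ F: ω(x)^{1/n} ≤ C' · liminf_{y → x, y ≠ x} d(x,y)/|x−y|, and limsup_{y → x, y ≠ x} d(x,y)/|x−y| ≤ C' · ω(x)^{1/n}. In particular, at almost every point the lower and upper metric derivatives of d with respect to the Euclidean metric are comparable to ω^{1/n}. -/

import Mathlib

open MeasureTheory Metric Filter
open scoped Topology ENNReal

/-- (Lemma 6.2, metric-derivative part) There are a Lebesgue-null Borel set `F` and a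
constant `C' ≥ 1` depending only on `n` and `C` such that at every point `x ∉ F`,
`ω(x)^{1/n} ≤ C' liminf_{y→x} d(x,y)/|x-y|` and
`limsup_{y→x} d(x,y)/|x-y| ≤ C' ω(x)^{1/n}`. -/
theorem metric_derivative_comparable_to_weight
    (n : ℕ) (hn : 2 ≤ n)
    (ω : EuclideanSpace ℝ (Fin n) → ℝ) (hω : ∀ x, 0 < ω x)
    (hωloc : LocallyIntegrable ω volume)
    (μ : Measure (EuclideanSpace ℝ (Fin n)))
    (hμ : μ = volume.withDensity fun x => ENNReal.ofReal (ω x))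
    (Cd : ℝ) (hCd : 1 ≤ Cd)
    (hdoub : ∀ (x : EuclideanSpace ℝ (Fin n)) (r : ℝ), 0 < r →
      μ (ball x (2 * r)) ≤ ENNReal.ofReal Cd * μ (ball x r))
    (hpos : ∀ (x : EuclideanSpace ℝ (Fin n)) (r : ℝ), 0 < r → 0 < μ (ball x r))
    (hfin : ∀ (x : EuclideanSpace ℝ (Fin n)) (r : ℝ), 0 < r → μ (ball x r) < ⊤)
    (d : EuclideanSpace ℝ (Fin n) → EuclideanSpace ℝ (Fin n) → ℝ)
    (hd_self : ∀ x, d x x = 0)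
    (hd_pos : ∀ x y, x ≠ y → 0 < d x y)
    (hd_symm : ∀ x y, d x y = d y x)
    (hd_tri : ∀ x y z, d x z ≤ d x y + d y z)
    (hd_top : ∀ (x : EuclideanSpace ℝ (Fin n)), ∀ ε : ℝ, 0 < ε →
      (∃ δ > 0, ∀ y, dist x y < δ → d x y < ε) ∧
      (∃ δ > 0, ∀ y, d x y < δ → dist x y < ε))
    (C : ℝ) (hC : 1 ≤ C)
    (hcomp : ∀ x y : EuclideanSpace ℝ (Fin n),
      C⁻¹ * (μ (ball x (dist x y))).toReal ≤ d x y ^ n ∧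
      d x y ^ n ≤ C * (μ (ball x (dist x y))).toReal) :
    ∃ F : Set (EuclideanSpace ℝ (Fin n)), MeasurableSet F ∧ volume F = 0 ∧
      ∃ C' : ℝ, 1 ≤ C' ∧ ∀ x ∉ F,
        ω x ^ ((1 : ℝ) / n) ≤
          C' * Filter.liminf (fun y => d x y / dist x y) (𝓝[≠] x) ∧
        Filter.limsup (fun y => d x y / dist x y) (𝓝[≠] x) ≤
          C' * ω x ^ ((1 : ℝ) / n) := by
  classical
  haveI : NeZero n := ⟨by omega⟩
  haveI : Nontrivial (EuclideanSpace ℝ (Fin n)) := inferInstance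
  have hnne : n ≠ 0 := by omega
  set K : ℝ := (volume (ball (0 : EuclideanSpace ℝ (Fin n)) 1)).toReal with hK
  have hK0 : 0 < K := by
    apply ENNReal.toReal_pos
    · exact (measure_ball_pos volume 0 one_pos).ne'
    · exact measure_ball_lt_top.ne
  have hC0 : 0 < C := lt_of_lt_of_le one_pos hC
  set P : EuclideanSpace ℝ (Fin n) → Prop := fun x =>
    Tendsto (fun r : ℝ => ⨍ y in closedBall x r, ω y) (𝓝[>] (0:ℝ)) (𝓝 (ω x)) with hPdef
  have hdiff : ∀ᵐ x ∂(volume : Measure (EuclideanSpace ℝ (Fin n))), P x := by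
    filter_upwards [IsUnifLocDoublingMeasure.ae_tendsto_average (volume : Measure (EuclideanSpace ℝ (Fin n))) hωloc 1] with x hx
    refine hx (fun _ => x) (fun r => r) tendsto_id ?_
    filter_upwards [self_mem_nhdsWithin] with r hr
    have hr' : (0:ℝ) < r := hr
    simpa using mem_closedBall_self (x := x) (by linarith : (0:ℝ) ≤ 1 * r)
  refine ⟨toMeasurable volume {x | ¬ P x}, measurableSet_toMeasurable _ _, by
      rw [measure_toMeasurable]; exact ae_iff.1 hdiff,
    max ((2*C*K) ^ ((1:ℝ)/n)) (max ((2*C/K) ^ ((1:ℝ)/n)) 1),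
    le_max_of_le_right (le_max_right _ _), ?_⟩
  intro x hxF
  have hx : P x := by
    by_contra h
    exact hxF (subset_toMeasurable _ _ h)
  set C' : ℝ := max ((2*C*K) ^ ((1:ℝ)/n)) (max ((2*C/K) ^ ((1:ℝ)/n)) 1) with hC'
  have hC'1 : (1:ℝ) ≤ C' := le_max_of_le_right (le_max_right _ _)
  have hωx : 0 < ω x := hω x
  -- key identity
  have key : ∀ r : ℝ, 0 < r →
      (μ (ball x r)).toReal = (⨍ y in closedBall x r, ω y) * (r ^ n * K) := by
    intro r hr
    have hint : IntegrableOn ω (closedBall x r) volume :=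
      hωloc.integrableOn_isCompact (isCompact_closedBall x r)
    have haeq : Metric.ball x r =ᵐ[(volume : Measure (EuclideanSpace ℝ (Fin n)))]
        Metric.closedBall x r := by
      refine ae_eq_set.2 ⟨?_, ?_⟩
      · rw [Set.diff_eq_empty.2 ball_subset_closedBall]; simp
      · rw [closedBall_diff_ball]; exact Measure.addHaar_sphere volume x r
    have hib : IntegrableOn ω (ball x r) volume := hint.mono_set ball_subset_closedBall
    have h1 : μ (ball x r) = ENNReal.ofReal (∫ y in ball x r, ω y) := by
      rw [hμ, withDensity_apply _ measurableSet_ball,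
        ← ofReal_integral_eq_lintegral_ofReal hib
          (Filter.Eventually.of_forall fun y => (hω y).le)]
    have h2 : ∫ y in ball x r, ω y = ∫ y in closedBall x r, ω y :=
      setIntegral_congr_set haeq
    have h3 : (volume (closedBall x r)).toReal = r ^ n * K := by
      have hcb := Measure.addHaar_closedBall
        (volume : Measure (EuclideanSpace ℝ (Fin n))) x hr.le
      rw [finrank_euclideanSpace_fin] at hcb
      rw [hcb, ENNReal.toReal_mul, ENNReal.toReal_ofReal (by positivity)]
    have hrK : (0:ℝ) < r ^ n * K := by positivity
    have h4 : ∫ y in closedBall x r, ω y = (⨍ y in closedBall x r, ω y) * (r ^ n * K) := by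
      rw [setAverage_eq, smul_eq_mul, Measure.real, h3]
      field_simp
    rw [h1, ENNReal.toReal_ofReal (setIntegral_nonneg measurableSet_ball fun y _ => (hω y).le),
      h2, h4]
  -- eventual bounds on the measure, in r
  have hIoo : Set.Ioo (ω x / 2) (2 * ω x) ∈ 𝓝 (ω x) := Ioo_mem_nhds (by linarith) (by linarith)
  have hev : ∀ᶠ r in 𝓝[>] (0:ℝ),
      (ω x / 2) * (r ^ n * K) ≤ (μ (ball x r)).toReal ∧
      (μ (ball x r)).toReal ≤ (2 * ω x) * (r ^ n * K) := by
    filter_upwards [hx hIoo, self_mem_nhdsWithin] with r hr hr0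
    have hr0' : (0:ℝ) < r := hr0
    have hk := key r hr0'
    have hrK : (0:ℝ) < r ^ n * K := by positivity
    exact ⟨by rw [hk]; exact mul_le_mul_of_nonneg_right hr.1.le hrK.le,
      by rw [hk]; exact mul_le_mul_of_nonneg_right hr.2.le hrK.le⟩
  -- distance tends to zero within (0, ∞)
  have hdist : Tendsto (fun y => dist x y) (𝓝[≠] x) (𝓝[>] (0:ℝ)) := by
    rw [tendsto_nhdsWithin_iff]
    constructor
    · apply tendsto_nhdsWithin_of_tendsto_nhds
      have hcont : Continuous fun y : EuclideanSpace ℝ (Fin n) => dist x y :=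
        continuous_const.dist continuous_id
      simpa using hcont.tendsto x
    · filter_upwards [self_mem_nhdsWithin] with y hy
      have hyne : y ≠ x := hy
      exact dist_pos.2 (Ne.symm hyne)
  set B2 : ℝ := (2 * C * K * ω x) ^ ((1:ℝ)/n) with hB2
  set B1 : ℝ := (K * ω x / (2 * C)) ^ ((1:ℝ)/n) with hB1
  have hB1nn : 0 ≤ B1 := Real.rpow_nonneg (by positivity) _
  have hB2nn : 0 ≤ B2 := Real.rpow_nonneg (by positivity) _
  have hbd : ∀ᶠ y in 𝓝[≠] x, B1 ≤ d x y / dist x y ∧ d x y / dist x y ≤ B2 := by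
    filter_upwards [hdist.eventually hev, self_mem_nhdsWithin] with y hy hyne'
    have hyne : y ≠ x := hyne'
    have hρ : 0 < dist x y := dist_pos.2 (Ne.symm hyne)
    have hd0 : 0 ≤ d x y := (hd_pos x y (Ne.symm hyne)).le
    obtain ⟨hcl, hcu⟩ := hcomp x y
    have hdn_le : d x y ^ n ≤ (2 * C * K * ω x) * dist x y ^ n := by
      calc d x y ^ n ≤ C * (μ (ball x (dist x y))).toReal := hcu
        _ ≤ C * ((2 * ω x) * (dist x y ^ n * K)) :=
            mul_le_mul_of_nonneg_left hy.2 hC0.le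
        _ = (2 * C * K * ω x) * dist x y ^ n := by ring
    have hdn_ge : (K * ω x / (2 * C)) * dist x y ^ n ≤ d x y ^ n := by
      calc (K * ω x / (2*C)) * dist x y ^ n
          = C⁻¹ * ((ω x / 2) * (dist x y ^ n * K)) := by field_simp
        _ ≤ C⁻¹ * (μ (ball x (dist x y))).toReal :=
            mul_le_mul_of_nonneg_left hy.1 (by positivity)
        _ ≤ d x y ^ n := hcl
    constructor
    · have h1 : B1 ^ n = K * ω x / (2 * C) := by
        rw [hB1, one_div, Real.rpow_inv_natCast_pow (by positivity) hnne]
      have hle : B1 ^ n ≤ (d x y / dist x y) ^ n := by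
        rw [h1, div_pow, le_div_iff₀ (by positivity)]
        exact hdn_ge
      exact le_of_pow_le_pow_left₀ hnne (by positivity) hle
    · have h1 : B2 ^ n = 2 * C * K * ω x := by
        rw [hB2, one_div, Real.rpow_inv_natCast_pow (by positivity) hnne]
      have hle : (d x y / dist x y) ^ n ≤ B2 ^ n := by
        rw [h1, div_pow, div_le_iff₀ (by positivity)]
        exact hdn_le
      exact le_of_pow_le_pow_left₀ hnne hB2nn hle
  haveI : NeBot (𝓝[≠] x) := Module.punctured_nhds_neBot ℝ _ x
  have hub : ∀ᶠ y in 𝓝[≠] x, d x y / dist x y ≤ B2 := hbd.mono fun y h => h.2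
  have hlb : ∀ᶠ y in 𝓝[≠] x, B1 ≤ d x y / dist x y := hbd.mono fun y h => h.1
  have hcob_le : IsCoboundedUnder (· ≤ ·) (𝓝[≠] x) (fun y => d x y / dist x y) :=
    isCoboundedUnder_le_of_eventually_le _ hlb
  have hcob_ge : IsCoboundedUnder (· ≥ ·) (𝓝[≠] x) (fun y => d x y / dist x y) :=
    isCoboundedUnder_ge_of_eventually_le _ hub
  have hlim_ub : limsup (fun y => d x y / dist x y) (𝓝[≠] x) ≤ B2 :=
    limsup_le_of_le hcob_le hub
  have hlim_lb : B1 ≤ liminf (fun y => d x y / dist x y) (𝓝[≠] x) :=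
    le_liminf_of_le hcob_ge hlb
  have hB1eq : (2*C/K) ^ ((1:ℝ)/n) * B1 = ω x ^ ((1:ℝ)/n) := by
    rw [hB1, ← Real.mul_rpow (by positivity) (by positivity)]
    congr 1
    field_simp
  constructor
  · calc ω x ^ ((1:ℝ)/n) = (2*C/K) ^ ((1:ℝ)/n) * B1 := hB1eq.symm
      _ ≤ C' * B1 := mul_le_mul_of_nonneg_right
          (le_max_of_le_right (le_max_left _ _)) hB1nn
      _ ≤ C' * liminf (fun y => d x y / dist x y) (𝓝[≠] x) :=
          mul_le_mul_of_nonneg_left hlim_lb (by linarith)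
  · calc limsup (fun y => d x y / dist x y) (𝓝[≠] x) ≤ B2 := hlim_ub
      _ = (2*C*K) ^ ((1:ℝ)/n) * ω x ^ ((1:ℝ)/n) := by
          rw [hB2, Real.mul_rpow (by positivity) hωx.le]
      _ ≤ C' * ω x ^ ((1:ℝ)/n) := mul_le_mul_of_nonneg_right (le_max_left _ _)
          (Real.rpow_nonneg hωx.le _)
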